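/- The valuation polygon of Ψ_q is: v(Ψ_q, μ) = μ for μ ≥ −1, and v(Ψ_q, μ) = q^{j−1}(μ + j − 1) − (q^{j−2} + ⋯ + q + 1) for −j ≤ μ ≤ 1−j, for every integer j ≥ 1, where v(Ψ_q, μ) = inf_i (v_p(a_i) + i μ) for Ψ_q = Σ a_i T^i. -/

import Mathlib

open PowerSeries

/-- `Ψ ∈ T + T²ℤ[[T]]` satisfies `∑_{j≥0} p^{-j} Ψ(p^j T)^{q^j} = T` (coefficientwise). -/
def IsPsi (p q : ℕ) (Ψ : PowerSeries ℤ) : Prop :=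
  PowerSeries.constantCoeff Ψ = 0 ∧ PowerSeries.coeff 1 Ψ = 1 ∧
  ∀ n : ℕ,
    (∑ j ∈ Finset.range (n + 1),
      ((p : ℚ) ^ j)⁻¹ *
        PowerSeries.coeff n
          ((PowerSeries.rescale ((p : ℚ) ^ j) (Ψ.map (Int.castRingHom ℚ))) ^ (q ^ j)))
      = PowerSeries.coeff n (PowerSeries.X : PowerSeries ℚ)

/-- Evaluation of the entire function defined by an integral power series at a point of a
complete nonarchimedean field. -/
noncomputable def psiEval (Ψ : PowerSeries ℤ) {K : Type} [NormedField K] (x : K) : K :=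
  ∑' i : ℕ, ((PowerSeries.coeff i Ψ : ℤ) : K) * x ^ i

/-- The valuation polygon function `v(Ψ, μ) = inf_{i, a_i ≠ 0} (v_p(a_i) + iμ)` of an
integral power series `Ψ = ∑ a_i T^i`. -/
noncomputable def valPolygon (p : ℕ) (Ψ : PowerSeries ℤ) (μ : ℝ) : ℝ :=
  ⨅ i : {i : ℕ // PowerSeries.coeff i Ψ ≠ 0},
    ((padicValInt p (PowerSeries.coeff (i : ℕ) Ψ) : ℝ) + (i : ℕ) * μ)

namespace PsiAux
open Finset

/-- partial geometric sum -/
def sN (q j : ℕ) : ℕ := ∑ k ∈ Finset.range j, q ^ k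

lemma sN_succ (q j : ℕ) : sN q (j+1) = sN q j + q ^ j := Finset.sum_range_succ _ _

lemma sN_ge (q : ℕ) (hq : 1 ≤ q) : ∀ j, j ≤ sN q j := by
  intro j; induction j with
  | zero => simp [sN]
  | succ j ih => rw [sN_succ]; have : 1 ≤ q ^ j := Nat.one_le_pow _ _ hq; omega

lemma sN_ge_succ (q : ℕ) (hq : 2 ≤ q) : ∀ j, 2 ≤ j → j + 1 ≤ sN q j := by
  intro j; induction j with
  | zero => omega
  | succ j ih =>
    intro _
    rw [sN_succ]
    rcases Nat.lt_or_ge j 2 with h | h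
    · interval_cases j
      · omega
      · have h1 : sN q 1 = 1 := by simp [sN]
        have : 2 ≤ q ^ 1 := by simpa using hq
        omega
    · have h1 := ih h
      have : 1 ≤ q ^ j := Nat.one_le_pow _ _ (by omega)
      omega

lemma sN_le (q j : ℕ) (hq : 1 ≤ q) : sN q j ≤ j * q ^ (j - 1) := by
  induction j with
  | zero => simp [sN]
  | succ j ih =>
    simp only [Nat.add_sub_cancel]
    rw [sN_succ]
    have h1 : q ^ (j-1) ≤ q ^ j := Nat.pow_le_pow_right hq (by omega)
    have h2 : sN q j ≤ j * q ^ j :=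
      le_trans ih (Nat.mul_le_mul_left _ h1)
    have : (j+1) * q ^ j = j * q ^ j + q ^ j := by ring
    omega

lemma sN_split (q a b : ℕ) : sN q (a + b) = sN q a + q ^ a * sN q b := by
  induction b with
  | zero => simp [sN]
  | succ b ih =>
    have : a + (b+1) = (a+b) + 1 := by ring
    rw [this, sN_succ, ih, sN_succ]
    ring

lemma sN_mul (q m : ℕ) : q * sN q m + 1 = sN q (m + 1) := by
  induction m with
  | zero => simp [sN]
  | succ m ih => rw [sN_succ, sN_succ, Nat.mul_add, ← ih]; ring

lemma pow_gt (q t : ℕ) (hq : 2 ≤ q) : t + 1 ≤ q ^ t := by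
  calc t + 1 ≤ 2 ^ t := Nat.succ_le_of_lt (Nat.lt_two_pow_self (n := t))
  _ ≤ q ^ t := Nat.pow_le_pow_left hq t

section Psi

variable {p q : ℕ} {Ψ : PowerSeries ℤ}

lemma coeff_pow_zero (h0 : constantCoeff Ψ = 0) :
    ∀ k n : ℕ, n < k → coeff n (Ψ ^ k) = 0 := by
  intro k
  induction k with
  | zero => omega
  | succ k ih =>
    intro n hn
    rw [pow_succ, coeff_mul]
    apply Finset.sum_eq_zero
    rintro ⟨i, i'⟩ hx
    rw [Finset.HasAntidiagonal.mem_antidiagonal] at hx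
    rcases Nat.eq_zero_or_pos i' with h | h
    · have : i' = 0 := h
      subst this
      rw [PowerSeries.coeff_zero_eq_constantCoeff, h0, mul_zero]
    · have : i < k := by omega
      rw [ih i this, zero_mul]

def Exact (p : ℕ) (e : ℕ) (x : ℤ) : Prop := (p:ℤ)^e ∣ x ∧ ¬ (p:ℤ)^(e+1) ∣ x

lemma exact_mul (hp : p.Prime) {a b : ℕ} {x y : ℤ} (hx : Exact p a x) (hy : Exact p b y) :
    Exact p (a + b) (x * y) := by
  have hpI : Prime (p : ℤ) := Nat.prime_iff_prime_int.mp hp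
  obtain ⟨x', hx'⟩ := hx.1
  obtain ⟨y', hy'⟩ := hy.1
  have hxnd : ¬ (p:ℤ) ∣ x' := by
    intro ⟨z, hz⟩
    exact hx.2 ⟨z, by rw [hx', hz, pow_succ]; ring⟩
  have hynd : ¬ (p:ℤ) ∣ y' := by
    intro ⟨z, hz⟩
    exact hy.2 ⟨z, by rw [hy', hz, pow_succ]; ring⟩
  constructor
  · rw [pow_add]; exact mul_dvd_mul hx.1 hy.1
  · rintro ⟨z, hz⟩
    have hne : ((p:ℤ))^(a+b) ≠ 0 := pow_ne_zero _ (by exact_mod_cast hp.ne_zero)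
    have : (p:ℤ)^(a+b) * (x' * y') = (p:ℤ)^(a+b) * ((p:ℤ) * z) := by
      rw [hx', hy'] at hz
      calc (p:ℤ)^(a+b) * (x' * y') = (p:ℤ)^a * x' * ((p:ℤ)^b * y') := by rw [pow_add]; ring
        _ = (p:ℤ)^(a+b+1) * z := hz
        _ = (p:ℤ)^(a+b) * ((p:ℤ) * z) := by rw [pow_succ]; ring
    have h2 : x' * y' = (p:ℤ) * z := mul_left_cancel₀ hne this
    have : (p:ℤ) ∣ x' * y' := ⟨z, h2⟩
    rcases hpI.dvd_mul.mp this with h | h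
    · exact hxnd h
    · exact hynd h

lemma exact_add {e : ℕ} {u v : ℤ} (hu : Exact p e u) (hv : (p:ℤ)^(e+1) ∣ v) :
    Exact p e (u + v) := by
  constructor
  · exact dvd_add hu.1 (dvd_trans (pow_dvd_pow _ (by omega)) hv)
  · intro h
    exact hu.2 (by simpa using dvd_sub h hv)

lemma exact_add' {e : ℕ} {u v : ℤ} (hu : Exact p e u) (hv : (p:ℤ)^(e+1) ∣ v) :
    Exact p e (v + u) := by
  rw [add_comm]; exact exact_add hu hv

lemma exact_pow (hp : p.Prime) (e : ℕ) : Exact p e ((p:ℤ)^e) := by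
  refine ⟨dvd_refl _, ?_⟩
  intro h
  have hpos : (0:ℤ) < (p:ℤ)^e := pow_pos (by exact_mod_cast hp.pos) _
  have := Int.le_of_dvd hpos h
  have h2 : ((p:ℤ))^e < (p:ℤ)^(e+1) :=
    pow_lt_pow_right₀ (by exact_mod_cast hp.one_lt) (by omega)
  omega

lemma exact_neg {e : ℕ} {x : ℤ} (h : Exact p e x) : Exact p e (-x) := by
  constructor
  · exact dvd_neg.mpr h.1
  · intro hh; exact h.2 (dvd_neg.mp hh)

lemma exact_ne_zero {e : ℕ} {x : ℤ} (h : Exact p e x) : x ≠ 0 := by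
  intro h0; exact h.2 (h0 ▸ dvd_zero _)

lemma multPow (h0 : constantCoeff Ψ = 0) {A B N : ℕ}
    (hA : ∀ i, i ≤ N → (p:ℤ) ^ (A * i - B) ∣ coeff i Ψ) :
    ∀ k, 1 ≤ k → ∀ n, n ≤ N + k - 1 → (p:ℤ) ^ (A * n - k * B) ∣ coeff n (Ψ ^ k) := by
  intro k
  induction k with
  | zero => omega
  | succ k ih =>
    intro _ n hn
    rcases Nat.eq_zero_or_pos k with hk | hk
    · subst hk
      simpa [one_mul] using hA n (by omega)
    · rw [pow_succ, coeff_mul]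
      apply Finset.dvd_sum
      rintro ⟨i, i'⟩ hx
      rw [Finset.HasAntidiagonal.mem_antidiagonal] at hx
      simp only
      rcases Nat.eq_zero_or_pos i' with h2 | h2
      · subst h2
        rw [PowerSeries.coeff_zero_eq_constantCoeff, h0, mul_zero]
        exact dvd_zero _
      rcases Nat.lt_or_ge i k with h1 | h1
      · rw [coeff_pow_zero h0 k i h1, zero_mul]
        exact dvd_zero _
      · have d1 := ih hk i (by omega)
        have d2 := hA i' (by omega)
        have e1 : A * i + A * i' = A * n := by rw [← Nat.mul_add, hx]
        calc (p:ℤ) ^ (A * n - (k+1) * B)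
            ∣ (p:ℤ) ^ ((A * i - k * B) + (A * i' - B)) := by
              apply pow_dvd_pow
              have e2 : (k+1) * B = k * B + B := by ring
              omega
          _ = (p:ℤ) ^ (A * i - k * B) * (p:ℤ) ^ (A * i' - B) := pow_add _ _ _
          _ ∣ _ := mul_dvd_mul d1 d2

lemma rec_eq (hp : p.Prime) (hΨ : IsPsi p q Ψ) :
    ∀ n : ℕ, 2 ≤ n →
      coeff n Ψ
        = -∑ i ∈ Finset.range n,
            (p:ℤ) ^ ((i+1)*(n-1)) * coeff n (Ψ ^ (q ^ (i+1))) := by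
  intro n hn
  have hp0 : (p:ℚ) ≠ 0 := by exact_mod_cast hp.ne_zero
  have H := hΨ.2.2 n
  have hterm : ∀ j : ℕ,
      ((p : ℚ) ^ j)⁻¹ *
        PowerSeries.coeff n
          ((PowerSeries.rescale ((p : ℚ) ^ j) (Ψ.map (Int.castRingHom ℚ))) ^ (q ^ j))
      = (((p:ℤ) ^ (j*(n-1)) * coeff n (Ψ ^ (q ^ j)) : ℤ) : ℚ) := by
    intro j
    rw [← map_pow (PowerSeries.rescale ((p:ℚ)^j)), PowerSeries.coeff_rescale,
        ← map_pow (PowerSeries.map (Int.castRingHom ℚ)), PowerSeries.coeff_map]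
    have hn' : n = (n - 1) + 1 := by omega
    push_cast
    simp only [eq_intCast]
    rw [← pow_mul]
    rw [show j * n = j + j * (n-1) by nth_rewrite 1 [hn']; ring]
    rw [pow_add]
    field_simp
  rw [Finset.sum_congr rfl (fun j _ => hterm j)] at H
  rw [PowerSeries.coeff_X] at H
  have hn1 : (if n = 1 then (1:ℚ) else 0) = 0 := by simp [show n ≠ 1 by omega]
  rw [hn1, ← Int.cast_sum] at H
  have H2 : (∑ j ∈ Finset.range (n+1), (p:ℤ) ^ (j*(n-1)) * coeff n (Ψ ^ (q ^ j))) = 0 := by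
    exact_mod_cast H
  rw [Finset.sum_range_succ'] at H2
  simp only [zero_mul, pow_zero, one_mul] at H2
  rw [pow_one] at H2
  omega

/-- STATEMENT (A): the Newton polygon lower bound -/
lemma lower (hp : p.Prime) (hq : 2 ≤ q) (hΨ : IsPsi p q Ψ) :
    ∀ n m : ℕ, (p:ℤ) ^ ((m+1) * n - sN q (m+1)) ∣ coeff n Ψ := by
  have h0 : constantCoeff Ψ = 0 := hΨ.1
  have hq1 : 1 ≤ q := by omega
  intro n
  induction n using Nat.strong_induction_on with
  | _ n ih =>
    intro m
    match n, hΨ with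
    | 0, hΨ => rw [PowerSeries.coeff_zero_eq_constantCoeff, h0]; exact dvd_zero _
    | 1, hΨ =>
      have : (m+1) * 1 - sN q (m+1) = 0 := by
        have := sN_ge q hq1 (m+1); omega
      rw [this, pow_zero]; exact one_dvd _
    | (n+2), hΨ =>
      rw [rec_eq hp hΨ (n+2) (by omega)]
      rw [dvd_neg]
      apply Finset.dvd_sum
      intro i _
      set j := i + 1 with hj
      have hnn : (n + 2) - 1 = n + 1 := by omega
      rw [hnn]
      rcases Nat.lt_or_ge i m with hc | hc
      -- case j ≤ m : use multPow
      · have hAi : ∀ i', i' ≤ n + 1 →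
            (p:ℤ) ^ ((m - j + 1) * i' - sN q (m - j + 1)) ∣ coeff i' Ψ := by
          intro i' hi'
          have := ih i' (by omega) (m - j)
          simpa using this
        have hk2 : 2 ≤ q ^ j := by
          calc 2 ≤ q := hq
          _ = q ^ 1 := (pow_one q).symm
          _ ≤ q ^ j := Nat.pow_le_pow_right hq1 (by omega)
        have hd := multPow h0 hAi (q ^ j) (by omega) (n+2) (by omega)
        have key : (m+1) * (n+2) - sN q (m+1)
            ≤ j * (n+1) + ((m - j + 1) * (n+2) - q ^ j * sN q (m - j + 1)) := by
          have e1 : sN q (m+1) = sN q j + q ^ j * sN q (m - j + 1) := by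
            rw [← sN_split]; congr 1; omega
          have e2 : (m+1) * (n+2) = j * (n+2) + (m - j + 1) * (n+2) := by
            rw [← Nat.add_mul]; congr 1; omega
          have e3 : j * (n+2) = j * (n+1) + j := by ring
          have e4 : j ≤ sN q j := sN_ge q hq1 j
          omega
        calc (p:ℤ) ^ ((m+1) * (n+2) - sN q (m+1))
            ∣ (p:ℤ) ^ (j * (n+1) + ((m - j + 1) * (n+2) - q ^ j * sN q (m - j + 1))) :=
              pow_dvd_pow _ key
          _ = (p:ℤ) ^ (j * (n+1)) * (p:ℤ) ^ ((m - j + 1) * (n+2) - q ^ j * sN q (m - j + 1)) :=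
              pow_add _ _ _
          _ ∣ (p:ℤ) ^ (j * (n+1)) * coeff (n+2) (Ψ ^ (q ^ j)) := mul_dvd_mul_left _ hd
      -- case j > m : prefactor suffices
      · apply dvd_mul_of_dvd_left
        apply pow_dvd_pow
        have e1 : (m+1) * (n+2) = (m+1) * (n+1) + (m+1) := by ring
        have e2 : (m+1) * (n+1) ≤ j * (n+1) :=
          Nat.mul_le_mul_right _ (by omega)
        have e3 : m + 1 ≤ sN q (m+1) := sN_ge q hq1 (m+1)
        omega

lemma dvd_term {e1 e2 t : ℕ} {x y : ℤ} (h1 : (p:ℤ)^e1 ∣ x) (h2 : (p:ℤ)^e2 ∣ y)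
    (ht : t ≤ e1 + e2) : (p:ℤ)^t ∣ x * y :=
  dvd_trans (pow_dvd_pow _ ht) (by rw [pow_add]; exact mul_dvd_mul h1 h2)

/-- the refined (two-slope) lower bound -/
lemma refined (hp : p.Prime) (hq : 2 ≤ q) (hΨ : IsPsi p q Ψ) (m i : ℕ) :
    (p:ℤ) ^ (((m+1)*i + (q^m - i)) - sN q (m+1)) ∣ coeff i Ψ := by
  rcases Nat.eq_zero_or_pos i with h0 | h0
  · subst h0
    rw [PowerSeries.coeff_zero_eq_constantCoeff, hΨ.1]
    exact dvd_zero _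
  rcases le_or_gt (q^m) i with h | h
  · have e : ((m+1)*i + (q^m - i)) - sN q (m+1) = (m+1)*i - sN q (m+1) := by omega
    rw [e]; exact lower hp hq hΨ i m
  · have hm : 1 ≤ m := by
      rcases Nat.eq_zero_or_pos m with h1 | h1
      · subst h1; simp at h; omega
      · exact h1
    have hl := lower hp hq hΨ i (m-1)
    have hm' : m - 1 + 1 = m := by omega
    rw [hm'] at hl
    have e : ((m+1)*i + (q^m - i)) - sN q (m+1) = m*i - sN q m := by
      have e1 : (m+1)*i = m*i + i := by ring
      have e2 : sN q (m+1) = sN q m + q^m := sN_succ q m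
      omega
    rw [e]; exact hl

/-- exactness propagates through powers -/
lemma powExact (hp : p.Prime) (hq : 2 ≤ q) (hΨ : IsPsi p q Ψ) (m : ℕ)
    (hEm : Exact p ((m+1) * q^m - sN q (m+1)) (coeff (q^m) Ψ)) :
    ∀ k, 1 ≤ k →
      (∀ n, (p:ℤ) ^ (((m+1)*n + (k*q^m - n)) - k * sN q (m+1)) ∣ coeff n (Ψ^k))
      ∧ Exact p (k * ((m+1)*q^m - sN q (m+1))) (coeff (k * q^m) (Ψ^k)) := by
  have hq1 : 1 ≤ q := by omega
  set V := (m+1) * q^m - sN q (m+1) with hVdef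
  have hs1 : sN q (m+1) ≤ (m+1) * q^m := by
    have := sN_le q (m+1) hq1
    simpa using this
  have hV : sN q (m+1) + V = (m+1) * q^m := by omega
  intro k
  induction k with
  | zero => omega
  | succ k ih =>
    intro _
    rcases Nat.eq_zero_or_pos k with hk | hk
    · subst hk
      constructor
      · intro n
        simpa using refined hp hq hΨ m n
      · simpa using hEm
    obtain ⟨ih1, ih2⟩ := ih hk
    constructor
    · intro n
      rw [pow_succ, coeff_mul]
      apply Finset.dvd_sum
      rintro ⟨i, i'⟩ hx
      rw [Finset.HasAntidiagonal.mem_antidiagonal] at hx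
      simp only
      apply dvd_term (ih1 i) (refined hp hq hΨ m i')
      have eM : (m+1)*i + (m+1)*i' = (m+1)*n := by rw [← Nat.mul_add, hx]
      have ek1 : (k+1) * q^m = k * q^m + q^m := by ring
      have ek2 : (k+1) * sN q (m+1) = k * sN q (m+1) + sN q (m+1) := by ring
      omega
    · have hmem : ((k * q^m, q^m) : ℕ × ℕ) ∈ Finset.HasAntidiagonal.antidiagonal ((k+1) * q^m) := by
        rw [Finset.HasAntidiagonal.mem_antidiagonal]; ring
      rw [pow_succ, coeff_mul, ← Finset.add_sum_erase _ _ hmem]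
      have hstep : Exact p ((k+1) * V) (coeff (k * q^m) (Ψ^k) * coeff (q^m) Ψ) := by
        have := exact_mul hp ih2 hEm
        rwa [show k * V + V = (k+1) * V by ring] at this
      apply exact_add hstep
      apply Finset.dvd_sum
      rintro ⟨i, i'⟩ hxe
      have hne := (Finset.mem_erase.mp hxe).1
      have hx := Finset.HasAntidiagonal.mem_antidiagonal.mp (Finset.mem_erase.mp hxe).2
      simp only at hx hne ⊢
      apply dvd_term (ih1 i) (refined hp hq hΨ m i')
      have hneq : ¬ (i = k * q^m ∧ i' = q^m) := by
        rintro ⟨h1, h2⟩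
        exact hne (by rw [Prod.ext_iff]; exact ⟨h1, h2⟩)
      have t2 : (m+1)*i + (m+1)*i' = (k+1) * sN q (m+1) + (k+1) * V := by
        rw [← Nat.mul_add, hx, ← Nat.mul_add, hV]; ring
      have ek1 : (k+1) * q^m = k * q^m + q^m := by ring
      have ek2 : (k+1) * sN q (m+1) = k * sN q (m+1) + sN q (m+1) := by ring
      omega

/-- STATEMENT (B): exact valuation at q^m -/
lemma exact_main (hp : p.Prime) (hq : 2 ≤ q) (hΨ : IsPsi p q Ψ) :
    ∀ m : ℕ, Exact p ((m+1) * q ^ m - sN q (m+1)) (coeff (q ^ m) Ψ) := by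
  have hq1 : 1 ≤ q := by omega
  intro m
  induction m with
  | zero =>
    have e : (0+1) * q^0 - sN q (0+1) = 0 := by simp [sN]
    rw [e, pow_zero, hΨ.2.1]
    refine ⟨one_dvd _, ?_⟩
    intro h
    rw [pow_one] at h
    have := Int.le_of_dvd one_pos h
    have : (2:ℤ) ≤ (p:ℤ) := by exact_mod_cast hp.two_le
    omega
  | succ m ih =>
    have hP := (powExact hp hq hΨ m ih q hq1).2
    have hn2 : 2 ≤ q^(m+1) := by
      calc 2 ≤ q := hq
      _ = q^1 := (pow_one q).symm
      _ ≤ q^(m+1) := Nat.pow_le_pow_right hq1 (by omega)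
    set n := q^(m+1) with hndef
    have hqq : q * q^m = n := (pow_succ' q m).symm
    rw [hqq] at hP
    rw [rec_eq hp hΨ n (by omega)]
    apply exact_neg
    have hsum := Finset.sum_range_succ'
      (fun i => (p:ℤ) ^ ((i+1)*(n-1)) * coeff n (Ψ ^ (q ^ (i+1)))) (n-1)
    rw [show n - 1 + 1 = n by omega] at hsum
    rw [hsum]
    -- leading term exact
    have hlead : Exact p ((m+1+1) * n - sN q (m+1+1))
        ((p:ℤ) ^ ((0+1)*(n-1)) * coeff n (Ψ ^ (q ^ (0+1)))) := by
      simp only [zero_add, pow_one, one_mul]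
      have := exact_mul hp (exact_pow hp (n-1)) hP
      have e : n - 1 + q * ((m+1) * q^m - sN q (m+1)) = (m+1+1) * n - sN q (m+1+1) := by
        have f3 : sN q (m+1) ≤ (m+1) * q^m := by simpa using sN_le q (m+1) hq1
        have f1 : q * ((m+1) * q^m) = (m+1) * n := by rw [hndef, pow_succ']; ring
        have f4 : q * ((m+1) * q^m - sN q (m+1)) + q * sN q (m+1) = q * ((m+1)*q^m) := by
          rw [← Nat.mul_add, Nat.sub_add_cancel f3]
        have f2 : q * sN q (m+1) + 1 = sN q (m+1+1) := sN_mul q (m+1)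
        have f5 : sN q (m+1+1) = sN q (m+1) + n := by rw [hndef]; exact sN_succ q (m+1)
        have f6 : (m+1+1) * n = (m+1) * n + n := by ring
        have f7 : sN q (m+1) ≤ (m+1) * n := by
          calc sN q (m+1) ≤ (m+1) * q^m := f3
          _ ≤ (m+1) * n := by
              rw [hndef]
              exact Nat.mul_le_mul_left _ (Nat.pow_le_pow_right hq1 (by omega))
        omega
      rwa [e] at this
    apply exact_add' hlead
    -- remaining terms
    apply Finset.dvd_sum
    intro i _
    set j := i + 2 with hjdef
    have hj2 : 2 ≤ j := by omega
    have e3 : j*(n-1) + j = j*n := by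
      rw [← Nat.mul_succ]; congr 1; omega
    have hs : sN q (m+1) ≤ (m+1) * n := by
      calc sN q (m+1) ≤ (m+1) * q^m := by simpa using sN_le q (m+1) hq1
      _ ≤ (m+1) * n := by
          rw [hndef]
          exact Nat.mul_le_mul_left _ (Nat.pow_le_pow_right hq1 (by omega))
    have target_eq : (m+1+1) * n - sN q (m+1+1) + 1
        = ((m+1) * n - sN q (m+1)) + 1 := by
      have f5 : sN q (m+1+1) = sN q (m+1) + n := by rw [hndef]; exact sN_succ q (m+1)
      have f6 : (m+1+1) * n = (m+1) * n + n := by ring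
      omega
    rcases Nat.lt_or_ge i m with hc | hc
    -- j ≤ m+1 : use multPow
    · have hAi : ∀ i', i' ≤ n →
          (p:ℤ) ^ ((m+2-j) * i' - sN q (m+2-j)) ∣ coeff i' Ψ := by
        intro i' _
        have := lower hp hq hΨ i' (m+1-j)
        rwa [show m+1-j+1 = m+2-j by omega] at this
      have hk2 : 2 ≤ q ^ j := by
        calc 2 ≤ q := hq
        _ = q ^ 1 := (pow_one q).symm
        _ ≤ q ^ j := Nat.pow_le_pow_right hq1 (by omega)
      have hd := multPow hΨ.1 hAi (q ^ j) (by omega) n (by omega)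
      apply dvd_term (pow_dvd_pow (p:ℤ) (le_refl (j*(n-1)))) hd
      have e1 : sN q (m+2) = sN q j + q^j * sN q (m+2-j) := by
        rw [← sN_split]; congr 1; omega
      have e2 : (m+1)*n + n = j*n + (m+2-j)*n := by
        rw [← Nat.add_mul, show j + (m+2-j) = m+2 by omega]; ring
      have e4 : j + 1 ≤ sN q j := sN_ge_succ q hq j hj2
      have e6 : sN q (m+2) = sN q (m+1) + n := by
        rw [show m + 2 = (m+1)+1 by omega]
        rw [hndef]; exact sN_succ q (m+1)
      rw [target_eq]
      omega
    -- j ≥ m+2 : prefactor suffices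
    · apply dvd_mul_of_dvd_left
      apply pow_dvd_pow
      have e2 : (m+2)*(n-1) ≤ j*(n-1) := Nat.mul_le_mul_right _ (by omega)
      have e5 : (m+2)*(n-1) + (m+2) = (m+2)*n := by
        rw [← Nat.mul_succ]; congr 1; omega
      have e7 : (m+2)*n = (m+1)*n + n := by ring
      have e8 : m + 2 ≤ n := by rw [hndef]; exact pow_gt q (m+1) hq
      have e9 : m + 1 ≤ sN q (m+1) := sN_ge q hq1 (m+1)
      rw [target_eq]
      omega

end Psi

end PsiAux

namespace PsiAux

section Main

variable {p q : ℕ} {Ψ : PowerSeries ℤ}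

lemma pvi_eq (hp : p.Prime) {e : ℕ} {x : ℤ} (hx : Exact p e x) :
    padicValInt p x = e := by
  haveI : Fact p.Prime := ⟨hp⟩
  have h1 : e ≤ padicValInt p x := by
    have h := (padicValInt_dvd_iff e x).mp hx.1
    rcases h with h | h
    · exact absurd h (exact_ne_zero hx)
    · exact h
  have h2 : ¬ (e + 1 ≤ padicValInt p x) := by
    intro h
    exact hx.2 ((padicValInt_dvd_iff (e+1) x).mpr (Or.inr h))
  omega

lemma cast_tsub_le {a b c : ℕ} (h : a - b ≤ c) : (a:ℝ) - (b:ℝ) ≤ (c:ℝ) := by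
  rcases le_or_gt b a with hc | hc
  · have h2 : ((a - b : ℕ):ℝ) ≤ (c:ℝ) := by exact_mod_cast h
    rwa [Nat.cast_sub hc] at h2
  · have h2 : (a:ℝ) ≤ (b:ℝ) := by exact_mod_cast hc.le
    have h3 : (0:ℝ) ≤ (c:ℝ) := by positivity
    linarith

lemma val_lb (hp : p.Prime) (hq : 2 ≤ q) (hΨ : IsPsi p q Ψ)
    {i : ℕ} (hi : coeff i Ψ ≠ 0) (m : ℕ) :
    (m+1) * i - sN q (m+1) ≤ padicValInt p (coeff i Ψ) := by
  haveI : Fact p.Prime := ⟨hp⟩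
  have h := (padicValInt_dvd_iff ((m+1) * i - sN q (m+1)) (coeff i Ψ)).mp
    (lower hp hq hΨ i m)
  rcases h with h | h
  · exact absurd h hi
  · exact h

theorem psi_val_polygon (hp : p.Prime) (hq : 2 ≤ q) (hΨ : IsPsi p q Ψ) :
    (∀ μ : ℝ, -1 ≤ μ → valPolygon p Ψ μ = μ) ∧
    (∀ j : ℕ, 1 ≤ j → ∀ μ : ℝ, -(j : ℝ) ≤ μ → μ ≤ 1 - (j : ℝ) →
      valPolygon p Ψ μ
        = (q : ℝ) ^ (j - 1) * (μ + (j : ℝ) - 1) - ∑ k ∈ Finset.range (j - 1), (q : ℝ) ^ k) := by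
  have hq1 : 1 ≤ q := by omega
  have h1 : coeff 1 Ψ = 1 := hΨ.2.1
  have h1ne : coeff 1 Ψ ≠ 0 := by rw [h1]; exact one_ne_zero
  haveI : Nonempty {i : ℕ // coeff i Ψ ≠ 0} := ⟨⟨1, h1ne⟩⟩
  have hpos : ∀ (i : {i : ℕ // coeff i Ψ ≠ 0}), 1 ≤ (i : ℕ) := by
    rintro ⟨i, hi⟩
    rcases Nat.eq_zero_or_pos i with h | h
    · exfalso; apply hi
      simp only [h]
      rw [PowerSeries.coeff_zero_eq_constantCoeff, hΨ.1]
    · exact h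
  constructor
  · -- part 1
    intro μ hμ
    have LB : ∀ (i : {i : ℕ // coeff i Ψ ≠ 0}),
        μ ≤ (padicValInt p (coeff (i : ℕ) Ψ) : ℝ) + (i : ℕ) * μ := by
      rintro ⟨i, hi⟩
      have hi1 : 1 ≤ i := hpos ⟨i, hi⟩
      have hv := val_lb hp hq hΨ hi 0
      rw [show (0+1) * i - sN q (0+1) = i - 1 by simp [sN]] at hv
      have hvr : (i:ℝ) - 1 ≤ (padicValInt p (coeff i Ψ) : ℝ) := by
        have := cast_tsub_le hv
        simpa using this
      have hir : (1:ℝ) ≤ (i:ℝ) := by exact_mod_cast hi1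
      simp only
      nlinarith [mul_nonneg (by linarith : (0:ℝ) ≤ (i:ℝ) - 1) (by linarith : (0:ℝ) ≤ 1 + μ)]
    apply le_antisymm
    · have hb : BddBelow (Set.range fun (i : {i : ℕ // coeff i Ψ ≠ 0}) =>
          ((padicValInt p (coeff (i : ℕ) Ψ) : ℝ) + (i : ℕ) * μ)) := by
        refine ⟨μ, ?_⟩
        rintro y ⟨i, rfl⟩
        exact LB i
      have hle := ciInf_le hb (⟨1, h1ne⟩ : {i : ℕ // coeff i Ψ ≠ 0})
      have he : (padicValInt p (coeff ((1:ℕ)) Ψ) : ℝ) + ((1:ℕ) : ℝ) * μ = μ := by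
        rw [h1]
        simp [padicValInt.one]
      calc valPolygon p Ψ μ ≤ _ := hle
        _ = μ := he
    · exact le_ciInf LB
  · -- part 2
    intro j hj μ hμ1 hμ2
    have hex := exact_main hp hq hΨ (j-1)
    rw [show j - 1 + 1 = j by omega] at hex
    have hcne : coeff (q^(j-1)) Ψ ≠ 0 := exact_ne_zero hex
    have hsle : sN q j ≤ j * q ^ (j-1) := sN_le q j hq1
    have hss : sN q j = sN q (j-1) + q^(j-1) := by
      rw [show j = (j-1) + 1 by omega]
      rw [show (j-1)+1-1 = j - 1 by omega]
      exact sN_succ q (j-1)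
    have hcast1 : ((sN q (j-1) : ℕ) : ℝ) = ∑ k ∈ Finset.range (j - 1), (q : ℝ) ^ k := by
      rw [sN]; push_cast; rfl
    have hcastc : ((q^(j-1) : ℕ) : ℝ) = (q:ℝ)^(j-1) := by push_cast; rfl
    have hjr : ((j - 1 : ℕ) : ℝ) = (j:ℝ) - 1 := by
      rw [Nat.cast_sub hj]; simp
    have LB : ∀ (i : {i : ℕ // coeff i Ψ ≠ 0}),
        ((q^(j-1) : ℕ) : ℝ) * (μ + (j:ℝ) - 1) - ((sN q (j-1) : ℕ) : ℝ)
          ≤ (padicValInt p (coeff (i : ℕ) Ψ) : ℝ) + (i : ℕ) * μ := by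
      rintro ⟨i, hi⟩
      have hi1 : 1 ≤ i := hpos ⟨i, hi⟩
      have hir : (1:ℝ) ≤ (i:ℝ) := by exact_mod_cast hi1
      simp only
      rcases le_or_gt i (q^(j-1)) with hic | hic
      · have hicr : (i:ℝ) ≤ ((q^(j-1) : ℕ) : ℝ) := by exact_mod_cast hic
        rcases Nat.eq_or_lt_of_le hj with hj1 | hj2
        · -- j = 1
          have hj1' : j = 1 := hj1.symm
          subst hj1'
          have hv : (0:ℝ) ≤ (padicValInt p (coeff i Ψ) : ℝ) := by positivity
          have hs10 : ((sN q (1-1) : ℕ) : ℝ) = 0 := by norm_num [sN]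
          have hc1 : ((q^(1-1) : ℕ) : ℝ) = 1 := by norm_num
          rw [hs10, hc1]
          push_cast
          nlinarith [mul_nonneg (by linarith : (0:ℝ) ≤ (i:ℝ) - 1)
            (by push_cast at hμ1 ⊢; linarith : (0:ℝ) ≤ μ + 1)]
        · -- j ≥ 2
          have hv := val_lb hp hq hΨ hi (j-2)
          rw [show j - 2 + 1 = j - 1 by omega] at hv
          have hvr : ((j:ℝ) - 1) * i - ((sN q (j-1) : ℕ):ℝ)
              ≤ (padicValInt p (coeff i Ψ) : ℝ) := by
            have h2 := cast_tsub_le hv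
            calc ((j:ℝ) - 1) * (i:ℝ) - ((sN q (j-1) : ℕ):ℝ)
                = (((j-1) * i : ℕ) : ℝ) - ((sN q (j-1) : ℕ):ℝ) := by
                  push_cast [hjr]; ring
              _ ≤ _ := h2
          have hμ3 : μ + (j:ℝ) - 1 ≤ 0 := by linarith
          nlinarith [mul_nonneg (by linarith : (0:ℝ) ≤ ((q^(j-1) : ℕ) : ℝ) - (i:ℝ))
            (by linarith : (0:ℝ) ≤ 1 - (j:ℝ) - μ)]
      · have hicr : ((q^(j-1) : ℕ) : ℝ) ≤ (i:ℝ) := by exact_mod_cast hic.le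
        have hv := val_lb hp hq hΨ hi (j-1)
        rw [show j - 1 + 1 = j by omega] at hv
        have hsjR : ((sN q j : ℕ) : ℝ) = ((sN q (j-1) : ℕ) : ℝ) + ((q^(j-1) : ℕ) : ℝ) := by
          rw [hss]; push_cast; ring
        have hvr : (j:ℝ) * i - (((sN q (j-1) : ℕ) : ℝ) + ((q^(j-1) : ℕ) : ℝ))
            ≤ (padicValInt p (coeff i Ψ) : ℝ) := by
          have h2 := cast_tsub_le hv
          rw [← hsjR]
          calc (j:ℝ) * (i:ℝ) - ((sN q j : ℕ):ℝ)
              = ((j * i : ℕ) : ℝ) - ((sN q j : ℕ):ℝ) := by push_cast; ring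
            _ ≤ _ := h2
        have hμ3 : (0:ℝ) ≤ μ + (j:ℝ) := by linarith
        nlinarith [mul_nonneg (by linarith : (0:ℝ) ≤ (i:ℝ) - ((q^(j-1) : ℕ) : ℝ)) hμ3]
    have htarget : (q : ℝ) ^ (j - 1) * (μ + (j : ℝ) - 1) - ∑ k ∈ Finset.range (j - 1), (q : ℝ) ^ k
        = ((q^(j-1) : ℕ) : ℝ) * (μ + (j:ℝ) - 1) - ((sN q (j-1) : ℕ) : ℝ) := by
      rw [hcastc, hcast1]
    rw [htarget]
    apply le_antisymm
    · have hb : BddBelow (Set.range fun (i : {i : ℕ // coeff i Ψ ≠ 0}) =>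
          ((padicValInt p (coeff (i : ℕ) Ψ) : ℝ) + (i : ℕ) * μ)) := by
        refine ⟨((q^(j-1) : ℕ) : ℝ) * (μ + (j:ℝ) - 1) - ((sN q (j-1) : ℕ) : ℝ), ?_⟩
        rintro y ⟨i, rfl⟩
        exact LB i
      have hle := ciInf_le hb (⟨q^(j-1), hcne⟩ : {i : ℕ // coeff i Ψ ≠ 0})
      have hpv : padicValInt p (coeff (q^(j-1)) Ψ) = j * q^(j-1) - sN q j :=
        pvi_eq hp hex
      have he : (padicValInt p (coeff ((q^(j-1):ℕ)) Ψ) : ℝ) + ((q^(j-1):ℕ) : ℝ) * μ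
          = ((q^(j-1) : ℕ) : ℝ) * (μ + (j:ℝ) - 1) - ((sN q (j-1) : ℕ) : ℝ) := by
        rw [hpv]
        have hc2 : ((j * q^(j-1) - sN q j : ℕ) : ℝ)
            = (j:ℝ) * ((q^(j-1) : ℕ) : ℝ) - (((sN q (j-1) : ℕ) : ℝ) + ((q^(j-1) : ℕ) : ℝ)) := by
          rw [Nat.cast_sub hsle, hss]
          push_cast
          ring
        rw [hc2]
        ring
      calc (⨅ i : {i : ℕ // coeff i Ψ ≠ 0},
            ((padicValInt p (coeff (i : ℕ) Ψ) : ℝ) + (i : ℕ) * μ)) ≤ _ := hle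
        _ = _ := he
    · exact le_ciInf LB

end Main

end PsiAux

/-- the valuation polygon of `Ψ_q`: `v(Ψ_q, μ) = μ` for `μ ≥ -1`, and
`v(Ψ_q, μ) = q^{j-1}(μ + j - 1) - (q^{j-2} + ⋯ + q + 1)` for `-j ≤ μ ≤ 1-j`, `j ≥ 1`. -/
theorem psi_valuation_polygon (p f : ℕ) (hp : p.Prime) (hf : 0 < f)
    (q : ℕ) (hq : q = p ^ f)
    (Ψ : PowerSeries ℤ) (hΨ : IsPsi p q Ψ) :
    (∀ μ : ℝ, -1 ≤ μ → valPolygon p Ψ μ = μ) ∧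
    (∀ j : ℕ, 1 ≤ j → ∀ μ : ℝ, -(j : ℝ) ≤ μ → μ ≤ 1 - (j : ℝ) →
      valPolygon p Ψ μ
        = (q : ℝ) ^ (j - 1) * (μ + (j : ℝ) - 1) - ∑ k ∈ Finset.range (j - 1), (q : ℝ) ^ k) := by
  have hq2 : 2 ≤ q := by
    subst hq
    calc 2 ≤ p := hp.two_le
    _ = p ^ 1 := (pow_one p).symm
    _ ≤ p ^ f := Nat.pow_le_pow_right hp.pos hf
  exact PsiAux.psi_val_polygon hp hq2 hΨ
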